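/- Ramanujan's second transformation. For every complex number n and every complex x with |x| < 1, (1 − x²)^{−1/2} · Σ_{k=0}^{∞} (1/2 − n)_k (1/2 + n)_k x^{2k} / ( (3/2)_k k! ) = Σ_{k=0}^{∞} (1 − n)_k (1 + n)_k x^{2k} / ( (3/2)_k k! ), where (1 − x²)^{−1/2} denotes the principal branch. -/

import Mathlib

open Finset Filter

/-- Pochhammer symbol `(a)ₖ = a(a+1)⋯(a+k−1)` for complex `a`. -/
noncomputable def poch (a : ℂ) (k : ℕ) : ℂ := ∏ i ∈ Finset.range k, (a + i)

noncomputable def qq (m : ℕ) : ℂ := poch (1/2) m / (Nat.factorial m : ℂ)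
noncomputable def cc (n : ℂ) (j : ℕ) : ℂ :=
  poch (1/2 - n) j * poch (1/2 + n) j / (poch (3/2) j * (Nat.factorial j : ℂ))
noncomputable def dd (n : ℂ) (k : ℕ) : ℂ :=
  poch (1 - n) k * poch (1 + n) k / (poch (3/2) k * (Nat.factorial k : ℂ))




lemma poch_succ (a : ℂ) (k : ℕ) : poch a (k+1) = poch a k * (a + k) :=
  Finset.prod_range_succ _ _

lemma poch_zero (a : ℂ) : poch a 0 = 1 := rfl

lemma pos_add_nat_ne_zero {r : ℝ} (hr : 0 < r) (i : ℕ) : (r : ℂ) + i ≠ 0 := by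
  intro h
  have : ((r:ℂ) + i).re = r + i := by simp
  rw [h] at this
  simp at this
  nlinarith [Nat.cast_nonneg (α := ℝ) i]

lemma poch_three_half_ne_zero (k : ℕ) : poch (3/2) k ≠ 0 := by
  unfold poch
  rw [Finset.prod_ne_zero_iff]
  intro i _
  have : ((3:ℂ)/2) = ((3/2 : ℝ) : ℂ) := by norm_num
  rw [this]
  exact pos_add_nat_ne_zero (by norm_num) i

lemma fact_ne_zero (k : ℕ) : ((Nat.factorial k : ℕ) : ℂ) ≠ 0 := by
  exact_mod_cast Nat.factorial_ne_zero k

lemma qq_succ (m : ℕ) : qq (m+1) = qq m * (1/2 + m) / (m+1) := by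
  unfold qq
  rw [poch_succ, Nat.factorial_succ, Nat.cast_mul]
  field_simp
  push_cast
  ring

lemma cc_succ (n : ℂ) (j : ℕ) :
    cc n (j+1) = cc n j * (1/2 - n + j) * (1/2 + n + j) / (3/2 + j) / (j+1) := by
  unfold cc
  rw [poch_succ, poch_succ, poch_succ, Nat.factorial_succ, Nat.cast_mul]
  have h1 := poch_three_half_ne_zero j
  have h2 := fact_ne_zero j
  have h3 : ((3:ℂ)/2 + j) ≠ 0 := by
    have : ((3:ℂ)/2) = ((3/2 : ℝ) : ℂ) := by norm_num
    rw [this]; exact pos_add_nat_ne_zero (by norm_num) j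
  have h4 : ((j:ℂ)+1) ≠ 0 := Nat.cast_add_one_ne_zero j
  field_simp
  push_cast
  ring

lemma dd_succ (n : ℂ) (k : ℕ) :
    dd n (k+1) = dd n k * (1 - n + k) * (1 + n + k) / (3/2 + k) / (k+1) := by
  unfold dd
  rw [poch_succ, poch_succ, poch_succ, Nat.factorial_succ, Nat.cast_mul]
  have h1 := poch_three_half_ne_zero k
  have h2 := fact_ne_zero k
  have h3 : ((3:ℂ)/2 + k) ≠ 0 := by
    have : ((3:ℂ)/2) = ((3/2 : ℝ) : ℂ) := by norm_num
    rw [this]; exact pos_add_nat_ne_zero (by norm_num) k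
  have h4 : ((k:ℂ)+1) ≠ 0 := Nat.cast_add_one_ne_zero k
  field_simp
  push_cast
  ring

lemma three_half_add_ne (j : ℕ) : ((3:ℂ)/2 + j) ≠ 0 := by
  have : ((3:ℂ)/2) = ((3/2 : ℝ) : ℂ) := by norm_num
  rw [this]
  exact pos_add_nat_ne_zero (by norm_num) j

lemma tele_pointwise (n : ℂ) (j m : ℕ) :
    (((j:ℂ)+m+1)^2 - n^2) * qq m * cc n j
      - (((j:ℂ)+m+1) * ((j:ℂ)+m+3/2)) * qq (m+1) * cc n j
    = (((j:ℂ)+1)*(2*j+3)/2) * qq m * cc n (j+1)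
      - (((j:ℂ))*(2*j+1)/2) * qq (m+1) * cc n j := by
  have h3 : ((3:ℂ)/2 + j) ≠ 0 := three_half_add_ne j
  have h4 : ((j:ℂ)+1) ≠ 0 := Nat.cast_add_one_ne_zero j
  have h5 : ((m:ℂ)+1) ≠ 0 := Nat.cast_add_one_ne_zero m
  have hD : (((m:ℂ)+1) * ((3/2+(j:ℂ)) * ((j:ℂ)+1))) ≠ 0 :=
    mul_ne_zero h5 (mul_ne_zero h3 h4)
  have e_q : qq (m+1) * ((m:ℂ)+1) = qq m * (1/2+(m:ℂ)) := by
    rw [qq_succ, div_mul_cancel₀ _ h5]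
  have e_c : cc n (j+1) * ((3/2+(j:ℂ)) * ((j:ℂ)+1))
      = cc n j * ((1/2-n+(j:ℂ))*(1/2+n+(j:ℂ))) := by
    rw [cc_succ, div_div, div_mul_cancel₀ _ (mul_ne_zero h3 h4)]; ring
  apply mul_left_cancel₀ hD
  linear_combination (((j:ℂ)*(2*(j:ℂ)+1)/2 - ((j:ℂ)+(m:ℂ)+1)*((j:ℂ)+(m:ℂ)+3/2))
      * ((3/2+(j:ℂ))*((j:ℂ)+1)) * cc n j) * e_q
    + (-((((j:ℂ)+1)*(2*(j:ℂ)+3)/2) * ((m:ℂ)+1) * qq m)) * e_c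

theorem saal (n : ℂ) (k : ℕ) :
    ∑ j ∈ Finset.range (k+1), qq (k-j) * cc n j = dd n k := by
  induction k with
  | zero => simp [qq, cc, dd, poch]
  | succ k ih =>
    set A : ℂ := ((k:ℂ)+1)^2 - n^2 with hA
    set B : ℂ := ((k:ℂ)+1) * ((k:ℂ)+3/2) with hB
    have hBne : B ≠ 0 := by
      apply mul_ne_zero (Nat.cast_add_one_ne_zero k)
      intro h
      have := three_half_add_ne k
      apply this
      rw [← h]; ring
    -- telescoping sum
    have tele : ∑ j ∈ Finset.range (k+1),
        (A * (qq (k-j) * cc n j) - B * (qq (k+1-j) * cc n j))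
        = B * cc n (k+1) := by
      set g : ℕ → ℂ := fun j => ((j:ℂ))*(2*(j:ℂ)+1)/2 * qq (k+1-j) * cc n j with hg
      have hsum := Finset.sum_range_sub g (k+1)
      have hg0 : g 0 = 0 := by simp [hg]
      have hgk : g (k+1) = B * cc n (k+1) := by
        simp only [hg, Nat.sub_self, hB]
        have : qq 0 = 1 := by simp [qq, poch]
        rw [this]
        push_cast
        ring
      rw [hg0, sub_zero, hgk] at hsum
      rw [← hsum]
      · apply Finset.sum_congr rfl
        intro j hj
        rw [Finset.mem_range] at hj
        have hjk : j ≤ k := Nat.lt_succ_iff.mp hj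
        obtain ⟨m, hm1, hm2⟩ : ∃ m, k - j = m ∧ j + m = k := ⟨k - j, rfl, by omega⟩
        have e2 : k + 1 - j = m + 1 := by omega
        have e3 : k + 1 - (j+1) = m := by omega
        simp only [hg, hm1, e2, e3, hA, hB]
        push_cast
        have hck : (j:ℂ) + (m:ℂ) = (k:ℂ) := by exact_mod_cast congrArg (Nat.cast : ℕ → ℂ) hm2
        have htp := tele_pointwise n j m
        rw [hck] at htp
        linear_combination htp
    rw [Finset.sum_sub_distrib, ← Finset.mul_sum, ← Finset.mul_sum, ih] at tele
    have h3 : ((3:ℂ)/2 + k) ≠ 0 := three_half_add_ne k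
    have h4 : ((k:ℂ)+1) ≠ 0 := Nat.cast_add_one_ne_zero k
    have hq0 : qq 0 = 1 := by simp [qq, poch]
    have hBd : B * dd n (k+1) = A * dd n k := by
      rw [dd_succ, hA, hB, div_div, ← mul_div_assoc,
        div_eq_iff (mul_ne_zero h3 h4)]
      ring
    apply mul_left_cancel₀ hBne
    rw [Finset.sum_range_succ, hBd]
    simp only [Nat.sub_self]
    linear_combination (-1 : ℂ) * tele + (B * cc n (k+1)) * hq0
lemma qq_zero : qq 0 = 1 := by simp [qq, poch]

lemma norm_qq_le_one (m : ℕ) : ‖qq m‖ ≤ 1 := by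
  induction m with
  | zero => simp [qq_zero]
  | succ m ih =>
    rw [qq_succ]
    have e1 : ‖((1:ℂ)/2 + m)‖ = 1/2 + (m:ℝ) := by
      have : ((1:ℂ)/2 + m) = (((1/2 + (m:ℝ)) : ℝ) : ℂ) := by push_cast; ring
      rw [this, Complex.norm_real, Real.norm_of_nonneg (by positivity)]
    have e2 : ‖((m:ℂ)+1)‖ = (m:ℝ)+1 := by
      have : ((m:ℂ)+1) = (((m:ℝ)+1 : ℝ) : ℂ) := by push_cast; ring
      rw [this, Complex.norm_real, Real.norm_of_nonneg (by positivity)]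
    rw [norm_div, norm_mul, e1, e2]
    rw [div_le_one (by positivity)]
    calc ‖qq m‖ * (1/2 + (m:ℝ)) ≤ 1 * (1/2 + (m:ℝ)) := by
          apply mul_le_mul_of_nonneg_right ih (by positivity)
      _ ≤ (m:ℝ) + 1 := by linarith

lemma summable_qq {z : ℂ} (hz : ‖z‖ < 1) : Summable (fun m => qq m * z^m) := by
  apply Summable.of_norm_bounded (summable_geometric_of_lt_one (norm_nonneg z) hz)
  intro m
  rw [norm_mul, norm_pow]
  calc ‖qq m‖ * ‖z‖^m ≤ 1 * ‖z‖^m :=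
        mul_le_mul_of_nonneg_right (norm_qq_le_one m) (by positivity)
    _ = ‖z‖^m := one_mul _

lemma summable_mgeo {r : ℝ} (hr0 : 0 ≤ r) (hr : r < 1) :
    Summable (fun m : ℕ => (m:ℝ) * r^(m-1)) := by
  apply (summable_nat_add_iff 1).1
  have : (fun m : ℕ => ((m+1 : ℕ):ℝ) * r^((m+1)-1))
      = fun m : ℕ => (m:ℝ) * r^m + r^m := by
    funext m; simp only [Nat.add_sub_cancel]; push_cast; ring
  rw [this]
  exact ((summable_pow_mul_geometric_of_norm_lt_one 1 (by
    rwa [Real.norm_eq_abs, abs_of_nonneg hr0])).congr (by intro m; push_cast; ring)).add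
    (summable_geometric_of_lt_one hr0 hr)

lemma summable_qq_deriv {z : ℂ} (hz : ‖z‖ < 1) :
    Summable (fun m : ℕ => qq m * ((m:ℂ) * z^(m-1))) := by
  apply Summable.of_norm_bounded (summable_mgeo (norm_nonneg z) hz)
  intro m
  rw [norm_mul, norm_mul, norm_pow]
  have e2 : ‖(m:ℂ)‖ = (m:ℝ) := by
    rw [show ((m:ℂ)) = (((m:ℝ):ℝ) : ℂ) by push_cast; ring, Complex.norm_real,
      Real.norm_of_nonneg (by positivity)]
  rw [e2]
  calc ‖qq m‖ * ((m:ℝ) * ‖z‖^(m-1)) ≤ 1 * ((m:ℝ) * ‖z‖^(m-1)) :=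
        mul_le_mul_of_nonneg_right (norm_qq_le_one m) (by positivity)
    _ = (m:ℝ) * ‖z‖^(m-1) := one_mul _

lemma one_sub_ne_zero {w : ℂ} (hw : ‖w‖ < 1) : 1 - w ≠ 0 := by
  intro h
  have : (1:ℂ) = w := by linear_combination h
  rw [← this] at hw
  simp at hw

lemma one_sub_slit {w : ℂ} (hw : ‖w‖ < 1) : 1 - w ∈ Complex.slitPlane := by
  rw [Complex.mem_slitPlane_iff]
  left
  have : w.re ≤ ‖w‖ := Complex.re_le_norm w
  simp only [Complex.sub_re, Complex.one_re]
  linarith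

noncomputable def GG : ℂ → ℂ := fun w => ∑' m, qq m * w^m

lemma ode {w : ℂ} (hw : ‖w‖ < 1) :
    (1 - w) * (∑' m, qq m * ((m:ℂ) * w^(m-1))) = (1/2) * GG w := by
  have S0 := (summable_qq hw).hasSum
  have S1 := (summable_qq_deriv hw).hasSum
  set P := ∑' m : ℕ, qq m * ((m:ℂ) * w^(m-1)) with hP
  -- shift index
  have Sshift : HasSum (fun m => qq (m+1) * (((m:ℂ)+1) * w^m)) P := by
    have := (hasSum_nat_add_iff' (f := fun m : ℕ => qq m * ((m:ℂ) * w^(m-1))) 1).2 S1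
    simp only [Finset.range_one, Finset.sum_singleton, Nat.cast_zero, zero_mul,
      mul_zero, sub_zero] at this
    refine this.congr_fun (fun m => ?_)
    push_cast
    simp only [Nat.add_sub_cancel]
  -- termwise identity
  have hterm : ∀ m : ℕ, qq (m+1) * (((m:ℂ)+1) * w^m)
      = (1/2) * (qq m * w^m) + w * (qq m * ((m:ℂ) * w^(m-1))) := by
    intro m
    have h5 : ((m:ℂ)+1) ≠ 0 := Nat.cast_add_one_ne_zero m
    rw [qq_succ]
    have cancel : qq m * (1/2+(m:ℂ)) / ((m:ℂ)+1) * (((m:ℂ)+1) * w^m)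
        = qq m * (1/2+(m:ℂ)) * w^m := by
      field_simp
    rw [cancel]
    cases m with
    | zero => norm_num [mul_comm]
    | succ m =>
      simp only [Nat.add_sub_cancel]
      push_cast
      ring
  have S2 : HasSum (fun m => (1/2) * (qq m * w^m) + w * (qq m * ((m:ℂ) * w^(m-1))))
      ((1/2) * GG w + w * P) := (S0.mul_left _).add (S1.mul_left _)
  have S3 : HasSum (fun m => qq (m+1) * (((m:ℂ)+1) * w^m)) ((1/2) * GG w + w * P) :=
    S2.congr_fun hterm
  have heq : P = (1/2) * GG w + w * P := Sshift.unique S3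
  linear_combination heq

lemma cpow_half_mul_GG {z : ℂ} (hz : ‖z‖ < 1) :
    (1 - z) ^ ((1/2) : ℂ) * GG z = 1 := by
  set r : ℝ := (1 + ‖z‖)/2 with hr
  have hr1 : r < 1 := by rw [hr]; linarith
  have hr0 : 0 < r := by rw [hr]; positivity
  have hzr : ‖z‖ < r := by rw [hr]; linarith
  set t : Set ℂ := Metric.ball (0:ℂ) r with ht
  have htop : IsOpen t := Metric.isOpen_ball
  have hmem : ∀ w ∈ t, ‖w‖ < 1 := by
    intro w hw
    rw [ht, Metric.mem_ball, dist_zero_right] at hw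
    linarith
  have hmemz : z ∈ t := by rw [ht, Metric.mem_ball, dist_zero_right]; exact hzr
  have hmem0 : (0:ℂ) ∈ t := by rw [ht, Metric.mem_ball, dist_zero_right]; simp [hr0]
  -- derivative of GG on t
  have hderiv : ∀ w ∈ t, HasDerivAt GG (∑' m, qq m * ((m:ℂ) * w^(m-1))) w := by
    intro w hw
    exact hasDerivAt_tsum_of_isPreconnected
      (u := fun m : ℕ => (m:ℝ) * r^(m-1))
      (summable_mgeo hr0.le hr1) htop
      ((convex_ball (0:ℂ) r).isPreconnected)
      (fun m y _ => (hasDerivAt_pow m y).const_mul (qq m))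
      (fun m y hy => by
        rw [norm_mul, norm_mul, norm_pow]
        have e2 : ‖(m:ℂ)‖ = (m:ℝ) := by
          rw [show ((m:ℂ)) = (((m:ℝ):ℝ) : ℂ) by push_cast; ring, Complex.norm_real,
            Real.norm_of_nonneg (by positivity)]
        rw [e2]
        have hyr : ‖y‖ ≤ r := by
          rw [ht, Metric.mem_ball, dist_zero_right] at hy; linarith
        calc ‖qq m‖ * ((m:ℝ) * ‖y‖^(m-1)) ≤ 1 * ((m:ℝ) * r^(m-1)) := by
              apply mul_le_mul (norm_qq_le_one m) ?_ (by positivity) zero_le_one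
              exact mul_le_mul_of_nonneg_left
                (pow_le_pow_left₀ (norm_nonneg y) hyr _) (by positivity)
          _ = (m:ℝ) * r^(m-1) := one_mul _)
      hmem0 (summable_qq (by simp))
      hw
  -- h is constant on t
  set h : ℂ → ℂ := fun w => (1 - w) ^ ((1/2) : ℂ) * GG w with hh
  have hderivh : ∀ w ∈ t, HasDerivAt h 0 w := by
    intro w hw
    have hw1 : ‖w‖ < 1 := hmem w hw
    have hne : (1:ℂ) - w ≠ 0 := one_sub_ne_zero hw1
    have hcpow : HasDerivAt (fun w : ℂ => (1 - w) ^ ((1/2) : ℂ))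
        ((1/2 : ℂ) * (1 - w) ^ ((1/2 : ℂ) - 1) * (-1)) w :=
      HasDerivAt.cpow_const ((hasDerivAt_id w).const_sub 1) (one_sub_slit hw1)
    have hprod : HasDerivAt h _ w := hcpow.mul (hderiv w hw)
    convert hprod using 1
    rw [Complex.cpow_sub _ _ hne, Complex.cpow_one]
    have hod := ode hw1
    set P := ∑' m : ℕ, qq m * ((m:ℂ) * w^(m-1)) with hP
    have hPv : P = (1/2) * GG w / (1 - w) := by
      rw [eq_div_iff hne]; linear_combination hod
    rw [hPv]
    field_simp
    ring
  have hconst : h z = h 0 := by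
    apply (convex_ball (0:ℂ) r).is_const_of_fderivWithin_eq_zero
      (fun w hw => ((hderivh w hw).differentiableAt).differentiableWithinAt)
      (fun w hw => ?_) hmemz hmem0
    rw [fderivWithin_of_isOpen htop hw, (hderivh w hw).hasFDerivAt.fderiv]
    exact ContinuousLinearMap.ext fun v => by simp
  have hG0 : GG 0 = 1 := by
    rw [GG, tsum_eq_single 0 (fun m hm => by simp [zero_pow hm])]
    simp [qq_zero]
  have hh0 : h 0 = 1 := by
    rw [hh]
    simp only [sub_zero, Complex.one_cpow, hG0, one_mul]
  rw [← hconst] at hh0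
  exact hh0

lemma hasSum_binom {z : ℂ} (hz : ‖z‖ < 1) :
    HasSum (fun m => qq m * z^m) ((1 - z) ^ (-(1/2) : ℂ)) := by
  have key := cpow_half_mul_GG hz
  have h2 : GG z = (1 - z) ^ (-(1/2) : ℂ) := by
    rw [Complex.cpow_neg]
    exact eq_inv_of_mul_eq_one_left (by linear_combination key)
  have hs : HasSum (fun m => qq m * z^m) (GG z) := (summable_qq hz).hasSum
  rwa [h2] at hs

/-- recursive real majorant -/
noncomputable def MM (a b s : ℝ) : ℕ → ℝ
  | 0 => 1
  | (j+1) => MM a b s j * ((a+j)*(b+j)*s/((3/2+j)*(j+1)))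

lemma MM_pos {a b s : ℝ} (ha : 1 ≤ a) (hb : 1 ≤ b) (hs : 0 < s) (j : ℕ) :
    0 < MM a b s j := by
  induction j with
  | zero => norm_num [MM]
  | succ j ih =>
    rw [MM]
    have h1 : (0:ℝ) < a + j := by positivity
    have h2 : (0:ℝ) < b + j := by positivity
    positivity

lemma tendsto_MM_ratio (a b s : ℝ) :
    Tendsto (fun j : ℕ => (a+(j:ℝ))*(b+j)*s/((3/2+j)*(j+1))) atTop (nhds s) := by
  have key : ∀ c : ℝ, Tendsto (fun j : ℕ => (c-1) * (1/((j:ℝ)+1))) atTop (nhds 0) := by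
    intro c
    have := tendsto_one_div_add_atTop_nhds_zero_nat (𝕜 := ℝ)
    simpa using this.const_mul (c-1)
  have t1 : Tendsto (fun j : ℕ => (a+(j:ℝ))/((j:ℝ)+1)) atTop (nhds 1) := by
    have : ∀ j : ℕ, (a+(j:ℝ))/((j:ℝ)+1) = 1 + (a-1) * (1/((j:ℝ)+1)) := by
      intro j
      have h6 : ((j:ℝ)+1) ≠ 0 := by positivity
      field_simp
      ring
    simp only [this]
    simpa using tendsto_const_nhds.add (key a)
  have t0 : Tendsto (fun j : ℕ => (1/((3:ℝ)/2+(j:ℝ)))) atTop (nhds 0) := by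
    apply squeeze_zero (fun j => by positivity) (g := fun j : ℕ => 1/((j:ℝ)+1))
      (fun j => by
        apply div_le_div_of_nonneg_left (by norm_num) (by positivity)
        linarith)
    exact tendsto_one_div_add_atTop_nhds_zero_nat
  have t2 : Tendsto (fun j : ℕ => (b+(j:ℝ))/((3:ℝ)/2+(j:ℝ))) atTop (nhds 1) := by
    have : ∀ j : ℕ, (b+(j:ℝ))/((3:ℝ)/2+(j:ℝ)) = 1 + (b-3/2) * (1/((3:ℝ)/2+j)) := by
      intro j
      have h6 : ((3:ℝ)/2+(j:ℝ)) ≠ 0 := by positivity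
      field_simp
      ring
    simp only [this]
    have := (t0.const_mul (b-3/2)).const_add 1
    simpa using this
  have heq : ∀ j : ℕ, (a+(j:ℝ))*(b+j)*s/((3/2+j)*(j+1))
      = ((a+(j:ℝ))/((j:ℝ)+1)) * ((b+(j:ℝ))/((3:ℝ)/2+(j:ℝ))) * s := by
    intro j
    have h5 : ((3:ℝ)/2 + (j:ℝ)) ≠ 0 := by positivity
    have h6 : ((j:ℝ)+1) ≠ 0 := by positivity
    field_simp
  simp only [heq]
  have := (t1.mul t2).mul_const s
  simpa using this

lemma summable_MM {a b s : ℝ} (ha : 1 ≤ a) (hb : 1 ≤ b) (hs : 0 < s) (hs1 : s < 1) :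
    Summable (MM a b s) := by
  apply summable_of_ratio_test_tendsto_lt_one hs1
    (Eventually.of_forall fun j => (MM_pos ha hb hs j).ne')
  have : ∀ j : ℕ, ‖MM a b s (j+1)‖ / ‖MM a b s j‖
      = (a+(j:ℝ))*(b+j)*s/((3/2+j)*(j+1)) := by
    intro j
    rw [Real.norm_of_nonneg (MM_pos ha hb hs (j+1)).le,
      Real.norm_of_nonneg (MM_pos ha hb hs j).le]
    rw [show MM a b s (j+1) = MM a b s j * ((a+j)*(b+j)*s/((3/2+j)*(j+1))) from rfl]
    rw [mul_comm (MM a b s j), mul_div_assoc, div_self (MM_pos ha hb hs j).ne', mul_one]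
  simp only [this]
  exact tendsto_MM_ratio a b s

lemma norm_cc_le (n z : ℂ) {s : ℝ} (hs : 0 < s) (hzs : ‖z‖ ≤ s) (j : ℕ) :
    ‖cc n j * z^j‖ ≤ MM (‖(1:ℂ)/2 - n‖ + 1) (‖(1:ℂ)/2 + n‖ + 1) s j := by
  set a := ‖(1:ℂ)/2 - n‖ + 1
  set b := ‖(1:ℂ)/2 + n‖ + 1
  have hs0 : 0 ≤ s := le_trans (norm_nonneg z) hzs
  induction j with
  | zero => simp [cc, poch, MM]
  | succ j ih =>
    have hstep : cc n (j+1) * z^(j+1)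
        = (cc n j * z^j) * ((1/2 - n + j) * ((1/2 + n + j) * (z / ((3/2 + j) * (j+1))))) := by
      rw [cc_succ, pow_succ]
      have h3 := three_half_add_ne j
      have h4 : ((j:ℂ)+1) ≠ 0 := Nat.cast_add_one_ne_zero j
      field_simp
    rw [hstep, show MM a b s (j+1) = MM a b s j * ((a+j)*(b+j)*s/((3/2+j)*(j+1))) from rfl]
    have hb1 : ‖(1:ℂ)/2 - n + j‖ ≤ a + j := by
      calc ‖(1:ℂ)/2 - n + j‖ ≤ ‖(1:ℂ)/2 - n‖ + ‖(j:ℂ)‖ := norm_add_le _ _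
        _ ≤ a + j := by
          simp only [Complex.norm_natCast]
          unfold a
          linarith
    have hb2 : ‖(1:ℂ)/2 + n + j‖ ≤ b + j := by
      calc ‖(1:ℂ)/2 + n + j‖ ≤ ‖(1:ℂ)/2 + n‖ + ‖(j:ℂ)‖ := norm_add_le _ _
        _ ≤ b + j := by
          simp only [Complex.norm_natCast]
          unfold b
          linarith
    have hb3 : ‖z / (((3:ℂ)/2 + j) * ((j:ℂ)+1))‖ ≤ s / ((3/2+(j:ℝ))*((j:ℝ)+1)) := by
      rw [norm_div, norm_mul]
      have e1 : ‖((3:ℂ)/2 + j)‖ = 3/2 + (j:ℝ) := by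
        rw [show ((3:ℂ)/2 + j) = (((3/2 + (j:ℝ)) : ℝ) : ℂ) by push_cast; ring,
          Complex.norm_real, Real.norm_of_nonneg (by positivity)]
      have e2 : ‖((j:ℂ)+1)‖ = (j:ℝ)+1 := by
        rw [show ((j:ℂ)+1) = ((((j:ℝ)+1) : ℝ) : ℂ) by push_cast; ring,
          Complex.norm_real, Real.norm_of_nonneg (by positivity)]
      rw [e1, e2]
      gcongr
    have ha1 : (1:ℝ) ≤ a := by unfold a; linarith [norm_nonneg ((1:ℂ)/2 - n)]
    have hb1' : (1:ℝ) ≤ b := by unfold b; linarith [norm_nonneg ((1:ℂ)/2 + n)]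
    have hMM0 : (0:ℝ) ≤ MM a b s j := (MM_pos ha1 hb1' hs j).le
    have hA0 : (0:ℝ) ≤ a + j := by positivity
    have hB0 : (0:ℝ) ≤ b + j := by positivity
    calc ‖(cc n j * z^j) * ((1/2 - n + j) * ((1/2 + n + j) * (z / ((3/2 + j) * (j+1)))))‖
        = ‖cc n j * z^j‖ * (‖(1:ℂ)/2 - n + j‖ * (‖(1:ℂ)/2 + n + j‖
            * ‖z / (((3:ℂ)/2 + j) * ((j:ℂ)+1))‖)) := by
          simp [norm_mul]
      _ ≤ MM a b s j * ((a+j) * ((b+j) * (s / ((3/2+(j:ℝ))*((j:ℝ)+1))))) := by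
          gcongr
      _ = MM a b s j * ((a+j)*(b+j)*s/((3/2+j)*(j+1))) := by ring

lemma summable_norm_qq {z : ℂ} (hz : ‖z‖ < 1) : Summable (fun m => ‖qq m * z^m‖) := by
  apply Summable.of_nonneg_of_le (fun m => norm_nonneg _) _
    (summable_geometric_of_lt_one (norm_nonneg z) hz)
  intro m
  rw [norm_mul, norm_pow]
  calc ‖qq m‖ * ‖z‖^m ≤ 1 * ‖z‖^m :=
        mul_le_mul_of_nonneg_right (norm_qq_le_one m) (by positivity)
    _ = ‖z‖^m := one_mul _

/-- **Ramanujan's second transformation.** -/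
theorem ramanujan_second_transformation (n x : ℂ) (hx : ‖x‖ < 1) :
    (1 - x ^ 2) ^ (-(1 / 2) : ℂ) *
      ∑' k : ℕ, poch (1 / 2 - n) k * poch (1 / 2 + n) k * x ^ (2 * k) /
        (poch (3 / 2) k * (Nat.factorial k : ℂ))
    = ∑' k : ℕ, poch (1 - n) k * poch (1 + n) k * x ^ (2 * k) /
        (poch (3 / 2) k * (Nat.factorial k : ℂ)) := by
  set z : ℂ := x^2 with hzdef
  have hz : ‖z‖ < 1 := by
    rw [hzdef, norm_pow]
    nlinarith [norm_nonneg x]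
  have e1 : (∑' k : ℕ, poch (1 / 2 - n) k * poch (1 / 2 + n) k * x ^ (2 * k) /
        (poch (3 / 2) k * (Nat.factorial k : ℂ))) = ∑' k : ℕ, cc n k * z^k := by
    apply tsum_congr
    intro k
    rw [pow_mul]
    unfold cc
    ring
  have e2 : (∑' k : ℕ, poch (1 - n) k * poch (1 + n) k * x ^ (2 * k) /
        (poch (3 / 2) k * (Nat.factorial k : ℂ))) = ∑' k : ℕ, dd n k * z^k := by
    apply tsum_congr
    intro k
    rw [pow_mul]
    unfold dd
    ring
  rw [e1, e2]
  -- summability of the c-series in norm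
  set s : ℝ := (‖z‖ + 1)/2 with hsdef
  have hs : 0 < s := by rw [hsdef]; positivity
  have hs1 : s < 1 := by rw [hsdef]; linarith
  have hzs : ‖z‖ ≤ s := by rw [hsdef]; linarith
  have ha1 : (1:ℝ) ≤ ‖(1:ℂ)/2 - n‖ + 1 := by linarith [norm_nonneg ((1:ℂ)/2 - n)]
  have hb1 : (1:ℝ) ≤ ‖(1:ℂ)/2 + n‖ + 1 := by linarith [norm_nonneg ((1:ℂ)/2 + n)]
  have hcnorm : Summable (fun j => ‖cc n j * z^j‖) :=
    Summable.of_nonneg_of_le (fun j => norm_nonneg _)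
      (norm_cc_le n z hs hzs) (summable_MM ha1 hb1 hs hs1)
  have hqnorm := summable_norm_qq hz
  rw [← (hasSum_binom hz).tsum_eq, mul_comm,
    tsum_mul_tsum_eq_tsum_sum_range_of_summable_norm hcnorm hqnorm]
  apply tsum_congr
  intro k
  have hinner : ∀ i ∈ Finset.range (k+1),
      (cc n i * z^i) * (qq (k-i) * z^(k-i)) = (qq (k-i) * cc n i) * z^k := by
    intro i hi
    rw [Finset.mem_range] at hi
    have hik : i + (k - i) = k := by omega
    calc (cc n i * z^i) * (qq (k-i) * z^(k-i))
        = (qq (k-i) * cc n i) * (z^i * z^(k-i)) := by ring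
      _ = (qq (k-i) * cc n i) * z^k := by rw [← pow_add, hik]
  rw [Finset.sum_congr rfl hinner, ← Finset.sum_mul, saal n k]
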